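/- Let μ be a distribution on binom([n],k) and let P = U_{1→k} D_{k→1} be the 1 ↔ k up-down walk for μ. Then the second-largest eigenvalue of P equals λ_max(Ψ_μ)/k, where Ψ_μ is the correlation matrix of μ. -/

import Mathlib

open Finset BigOperators

noncomputable section

def kSets (n k : ℕ) : Finset (Finset (Fin n)) := Finset.univ.powersetCard k

def margin {n : ℕ} (μ : Finset (Fin n) → ℝ) (k : ℕ) (i : Fin n) : ℝ :=
  ∑ S ∈ kSets n k, if i ∈ S then μ S else 0

def pairProb {n : ℕ} (μ : Finset (Fin n) → ℝ) (k : ℕ) (i j : Fin n) : ℝ :=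
  ∑ S ∈ kSets n k, if i ∈ S ∧ j ∈ S then μ S else 0

def condProb {n : ℕ} (μ : Finset (Fin n) → ℝ) (k : ℕ) (i j : Fin n) : ℝ :=
  pairProb μ k i j / margin μ k i

/-- The correlation matrix `Ψ_μ`. -/
def corrMatrix {n : ℕ} (μ : Finset (Fin n) → ℝ) (k : ℕ) : Matrix (Fin n) (Fin n) ℝ :=
  fun i j => if i = j then 1 - margin μ k i else condProb μ k i j - margin μ k j

/-- The largest eigenvalue of a matrix. -/
def lambdaMax {n : ℕ} (M : Matrix (Fin n) (Fin n) ℝ) : ℝ :=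
  sSup {t : ℝ | Module.End.HasEigenvalue (Matrix.toLin' M) t}

/-- Transition matrix of the `1 ↔ k` up-down walk `U_{1→k} D_{k→1}`:
from `i`, pick `S ∋ i` with probability `μ(S)/P_μ[i ∈ S]`, then a uniform element of `S`. -/
def upDown {n : ℕ} (μ : Finset (Fin n) → ℝ) (k : ℕ) : Matrix (Fin n) (Fin n) ℝ :=
  fun i j => ∑ S ∈ kSets n k,
    (if i ∈ S then μ S / margin μ k i else 0) * (if j ∈ S then 1 / (k : ℝ) else 0)

/-- The stationary distribution `μ D_{k→1}` of the `1 ↔ k` up-down walk. -/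
def statDist {n : ℕ} (μ : Finset (Fin n) → ℝ) (k : ℕ) (i : Fin n) : ℝ :=
  margin μ k i / k

/-- The second-largest eigenvalue of the reversible walk `P = U_{1→k} D_{k→1}`, via the
variational (Rayleigh quotient) characterization over functions orthogonal to constants
in `L²(π)`, `π = μ D_{k→1}`. -/
def lambdaTwo {n : ℕ} (μ : Finset (Fin n) → ℝ) (k : ℕ) : ℝ :=
  sSup {t : ℝ | ∃ v : Fin n → ℝ, v ≠ 0 ∧ (∑ i, statDist μ k i * v i) = 0 ∧
    t = (∑ i, statDist μ k i * v i * ((upDown μ k).mulVec v i)) /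
        (∑ i, statDist μ k i * (v i) ^ 2)}

/-! ### Auxiliary material for the proof -/

namespace UD
open Matrix

/-- Eigenvalues of `toLin'` are exactly the `t` admitting a nonzero vector with `A *ᵥ v = t • v`. -/
lemma hasEigenvalue_toLin'_iff {n : ℕ} (A : Matrix (Fin n) (Fin n) ℝ) (t : ℝ) :
    Module.End.HasEigenvalue (Matrix.toLin' A) t ↔ ∃ v : Fin n → ℝ, v ≠ 0 ∧ A *ᵥ v = t • v := by
  constructor
  · intro h
    obtain ⟨v, hv⟩ := h.exists_hasEigenvector
    refine ⟨v, hv.2, ?_⟩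
    have := Module.End.mem_eigenspace_iff.1 hv.1
    simpa [Matrix.toLin'_apply] using this
  · rintro ⟨v, hv0, hv⟩
    exact Module.End.hasEigenvalue_of_hasEigenvector
      ⟨Module.End.mem_eigenspace_iff.2 (by simpa [Matrix.toLin'_apply] using hv), hv0⟩

section spectral
variable {n : ℕ} {A : Matrix (Fin n) (Fin n) ℝ} (hA : A.IsHermitian)

lemma star_eq_transpose (U : Matrix (Fin n) (Fin n) ℝ) : star U = Uᵀ := by
  ext i j
  simp [Matrix.star_eq_conjTranspose, Matrix.conjTranspose_apply]

lemma diag_real :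
    Matrix.diagonal (RCLike.ofReal ∘ hA.eigenvalues) = Matrix.diagonal hA.eigenvalues := by
  congr 1

/-- Any eigenvalue of a real symmetric matrix is at most the largest `hA.eigenvalues`. -/
lemma eig_le_max {i₀ : Fin n} (hmax : ∀ i, hA.eigenvalues i ≤ hA.eigenvalues i₀)
    {t : ℝ} {w : Fin n → ℝ} (hw : w ≠ 0) (heig : A *ᵥ w = t • w) :
    t ≤ hA.eigenvalues i₀ := by
  set U : Matrix (Fin n) (Fin n) ℝ := (hA.eigenvectorUnitary : Matrix (Fin n) (Fin n) ℝ) with hU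
  have h2 : U * star U = 1 := (Matrix.mem_unitaryGroup_iff).mp hA.eigenvectorUnitary.2
  set c : Fin n → ℝ := star U *ᵥ w with hc
  have hUc : U *ᵥ c = w := by rw [hc, Matrix.mulVec_mulVec, h2, Matrix.one_mulVec]
  have hc0 : c ≠ 0 := by
    intro h
    exact hw (by rw [← hUc, h, Matrix.mulVec_zero])
  have hdiag : star U * A * U = Matrix.diagonal hA.eigenvalues := by
    rw [← diag_real hA]; simpa [Unitary.conjStarAlgAut_star_apply, Matrix.mul_assoc] using hA.conjStarAlgAut_star_eigenvectorUnitary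
  have hDc : Matrix.diagonal hA.eigenvalues *ᵥ c = t • c := by
    rw [← hdiag, ← Matrix.mulVec_mulVec, ← Matrix.mulVec_mulVec, hUc, heig,
      Matrix.mulVec_smul]
  obtain ⟨i, hci⟩ := Function.ne_iff.1 hc0
  have h3 := congrFun hDc i
  rw [Matrix.mulVec_diagonal] at h3
  have ht : t = hA.eigenvalues i := by
    have : hA.eigenvalues i * c i = t * c i := by simpa using h3
    exact (mul_right_cancel₀ hci this).symm
  rw [ht]; exact hmax i

/-- Rayleigh-quotient bound by the largest eigenvalue, for a real symmetric matrix. -/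
lemma rayleigh_le {i₀ : Fin n} (hmax : ∀ i, hA.eigenvalues i ≤ hA.eigenvalues i₀)
    (w : Fin n → ℝ) :
    w ⬝ᵥ (A *ᵥ w) ≤ hA.eigenvalues i₀ * (w ⬝ᵥ w) := by
  set U : Matrix (Fin n) (Fin n) ℝ := (hA.eigenvectorUnitary : Matrix (Fin n) (Fin n) ℝ) with hU
  have h2 : U * star U = 1 := (Matrix.mem_unitaryGroup_iff).mp hA.eigenvectorUnitary.2
  set c : Fin n → ℝ := star U *ᵥ w with hc
  have hUc : U *ᵥ c = w := by rw [hc, Matrix.mulVec_mulVec, h2, Matrix.one_mulVec]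
  have hAw : A *ᵥ w = U *ᵥ (Matrix.diagonal hA.eigenvalues *ᵥ c) := by
    conv_lhs => rw [hA.spectral_theorem]
    rw [diag_real hA, Matrix.mulVec_mulVec, Matrix.mulVec_mulVec, Matrix.mul_assoc]
    rw [Unitary.conjStarAlgAut_apply, Matrix.mul_assoc]
  have hwU : ∀ x : Fin n → ℝ, w ⬝ᵥ (U *ᵥ x) = c ⬝ᵥ x := by
    intro x
    rw [dotProduct_mulVec, hc, star_eq_transpose, Matrix.mulVec_transpose]
  have hcc : c ⬝ᵥ c = w ⬝ᵥ w := by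
    calc c ⬝ᵥ c = c ⬝ᵥ (star U *ᵥ w) := by rw [hc]
    _ = (c ᵥ* star U) ⬝ᵥ w := dotProduct_mulVec c (star U) w
    _ = ((star U)ᵀ *ᵥ c) ⬝ᵥ w := by rw [Matrix.mulVec_transpose]
    _ = (U *ᵥ c) ⬝ᵥ w := by rw [star_eq_transpose, Matrix.transpose_transpose]
    _ = w ⬝ᵥ w := by rw [hUc]
  rw [hAw, hwU, ← hcc]
  have h4 : c ⬝ᵥ (Matrix.diagonal hA.eigenvalues *ᵥ c)
      = ∑ i, hA.eigenvalues i * (c i * c i) := by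
    simp only [dotProduct, Matrix.mulVec_diagonal]
    exact Finset.sum_congr rfl fun i _ => by ring
  rw [h4, dotProduct, Finset.mul_sum]
  apply Finset.sum_le_sum
  intro i _
  exact mul_le_mul_of_nonneg_right (hmax i) (mul_self_nonneg _)

/-- A real symmetric matrix admits a largest eigenvalue with an eigenvector. -/
lemma exists_max_eigenvector (hn : 0 < n) :
    ∃ i₀ : Fin n, (∀ i, hA.eigenvalues i ≤ hA.eigenvalues i₀) ∧
      ∃ w : Fin n → ℝ, w ≠ 0 ∧ A *ᵥ w = hA.eigenvalues i₀ • w := by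
  haveI : Nonempty (Fin n) := ⟨⟨0, hn⟩⟩
  obtain ⟨i₀, hi₀⟩ := Finite.exists_max hA.eigenvalues
  refine ⟨i₀, hi₀, hA.eigenvectorBasis i₀, ?_, hA.mulVec_eigenvectorBasis i₀⟩
  exact (WithLp.ofLp_eq_zero 2).ne.2 <| hA.eigenvectorBasis.orthonormal.ne_zero i₀

end spectral

variable {n k : ℕ} {μ : Finset (Fin n) → ℝ}

lemma card_of_mem {S : Finset (Fin n)} (hS : S ∈ kSets n k) : S.card = k :=
  (Finset.mem_powersetCard.1 hS).2

lemma pairProb_comm (i j : Fin n) : pairProb μ k i j = pairProb μ k j i :=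
  Finset.sum_congr rfl fun S _ => by simp only [and_comm]

lemma pairProb_self (i : Fin n) : pairProb μ k i i = margin μ k i :=
  Finset.sum_congr rfl fun S _ => by simp only [and_self]

lemma sum_pairProb (i : Fin n) : ∑ j, pairProb μ k i j = k * margin μ k i := by
  unfold pairProb margin
  rw [Finset.sum_comm, Finset.mul_sum]
  refine Finset.sum_congr rfl fun S hS => ?_
  by_cases hi : i ∈ S
  · simp only [hi, true_and, if_true]
    rw [Finset.sum_ite_mem, Finset.univ_inter, Finset.sum_const, card_of_mem hS,
      nsmul_eq_mul]
  · simp [hi]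

lemma sum_margin (hsum : ∑ S ∈ kSets n k, μ S = 1) : ∑ i, margin μ k i = k := by
  unfold margin
  rw [Finset.sum_comm]
  have h1 : ∀ S ∈ kSets n k, ∑ i, (if i ∈ S then μ S else 0) = k * μ S := by
    intro S hS
    rw [Finset.sum_ite_mem, Finset.univ_inter, Finset.sum_const, card_of_mem hS, nsmul_eq_mul]
  rw [Finset.sum_congr rfl h1, ← Finset.mul_sum, hsum, mul_one]

/-- `d` is the entrywise square root of the stationary distribution. -/
def D (μ : Finset (Fin n) → ℝ) (k : ℕ) : Fin n → ℝ := fun i => Real.sqrt (statDist μ k i)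

/-- Symmetrization `N = Δ Ψ Δ⁻¹` of the correlation matrix, `Δ = diag(d)`. -/
def N (μ : Finset (Fin n) → ℝ) (k : ℕ) : Matrix (Fin n) (Fin n) ℝ :=
  fun i j => pairProb μ k i j / (k * (D μ k i * D μ k j)) - k * (D μ k i * D μ k j)

/-- The quadratic form of `pairProb`. -/
def Q (μ : Finset (Fin n) → ℝ) (k : ℕ) (v : Fin n → ℝ) : ℝ :=
  ∑ i, ∑ j, v i * v j * pairProb μ k i j

section basic
variable (hk : 1 ≤ k) (hmarg : ∀ i, 0 < margin μ k i)
include hk hmarg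

lemma statDist_pos (i : Fin n) : 0 < statDist μ k i :=
  div_pos (hmarg i) (by exact_mod_cast hk)

lemma D_pos (i : Fin n) : 0 < D μ k i := Real.sqrt_pos.2 (statDist_pos hk hmarg i)

lemma D_sq (i : Fin n) : D μ k i ^ 2 = statDist μ k i :=
  Real.sq_sqrt (statDist_pos hk hmarg i).le

lemma margin_eq (i : Fin n) : margin μ k i = k * D μ k i ^ 2 := by
  rw [D_sq hk hmarg, statDist, mul_div_cancel₀]
  have : (0:ℝ) < k := by exact_mod_cast hk
  exact this.ne'

end basic

lemma sum_D_sq (hk : 1 ≤ k) (hmarg : ∀ i, 0 < margin μ k i)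
    (hsum : ∑ S ∈ kSets n k, μ S = 1) : ∑ i, D μ k i ^ 2 = 1 := by
  have hk0 : (k : ℝ) ≠ 0 := by positivity
  calc ∑ i, D μ k i ^ 2 = ∑ i, margin μ k i / k :=
        Finset.sum_congr rfl fun i _ => by rw [D_sq hk hmarg]; rfl
    _ = (∑ i, margin μ k i) / k := by rw [Finset.sum_div]
    _ = 1 := by rw [sum_margin hsum, div_self hk0]


lemma Q_eq (v : Fin n → ℝ) :
    Q μ k v = ∑ S ∈ kSets n k, μ S * (∑ i, if i ∈ S then v i else 0) ^ 2 := by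
  have key : ∀ S, μ S * (∑ i, if i ∈ S then v i else 0) ^ 2
      = ∑ i, ∑ j, (if i ∈ S then v i else 0) * (if j ∈ S then v j else 0) * μ S := by
    intro S
    rw [sq, Finset.sum_mul_sum, Finset.mul_sum]
    refine Finset.sum_congr rfl fun i _ => ?_
    rw [Finset.mul_sum]
    exact Finset.sum_congr rfl fun j _ => by ring
  rw [Finset.sum_congr rfl fun S _ => key S, Finset.sum_comm]
  unfold Q
  refine Finset.sum_congr rfl fun i _ => ?_
  rw [Finset.sum_comm]
  refine Finset.sum_congr rfl fun j _ => ?_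
  unfold pairProb
  rw [Finset.mul_sum]
  refine Finset.sum_congr rfl fun S _ => ?_
  by_cases hi : i ∈ S <;> by_cases hj : j ∈ S <;> simp [hi, hj]

lemma Q_nonneg (hnonneg : ∀ S, 0 ≤ μ S) (v : Fin n → ℝ) : 0 ≤ Q μ k v := by
  rw [Q_eq]
  exact Finset.sum_nonneg fun S _ => mul_nonneg (hnonneg S) (sq_nonneg _)

lemma upDown_eq (i j : Fin n) :
    upDown μ k i j = pairProb μ k i j / (margin μ k i * k) := by
  unfold upDown pairProb
  rw [Finset.sum_div]
  refine Finset.sum_congr rfl fun S _ => ?_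
  by_cases hi : i ∈ S <;> by_cases hj : j ∈ S <;>
    simp [hi, hj, ← div_eq_mul_inv, div_div]

lemma stat_upDown (hk : 1 ≤ k) (hmarg : ∀ i, 0 < margin μ k i) (i j : Fin n) :
    statDist μ k i * upDown μ k i j = pairProb μ k i j / (k : ℝ) ^ 2 := by
  have hk0 : (k : ℝ) ≠ 0 := by
    have : (0:ℝ) < k := by exact_mod_cast hk
    exact this.ne'
  rw [upDown_eq, statDist]
  field_simp [(hmarg i).ne']

lemma num_eq (hk : 1 ≤ k) (hmarg : ∀ i, 0 < margin μ k i) (v : Fin n → ℝ) :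
    ∑ i, statDist μ k i * v i * ((upDown μ k) *ᵥ v) i = Q μ k v / (k : ℝ) ^ 2 := by
  unfold Q
  rw [Finset.sum_div]
  refine Finset.sum_congr rfl fun i _ => ?_
  rw [Matrix.mulVec, dotProduct, Finset.mul_sum, Finset.sum_div]
  refine Finset.sum_congr rfl fun j _ => ?_
  have h := stat_upDown hk hmarg (μ := μ) i j
  calc statDist μ k i * v i * (upDown μ k i j * v j)
      = statDist μ k i * upDown μ k i j * (v i * v j) := by ring
    _ = pairProb μ k i j / (k:ℝ)^2 * (v i * v j) := by rw [h]
    _ = v i * v j * pairProb μ k i j / (k:ℝ)^2 := by ring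

lemma den_eq (hk : 1 ≤ k) (hmarg : ∀ i, 0 < margin μ k i) (v : Fin n → ℝ) :
    ∑ i, statDist μ k i * v i ^ 2 = ∑ i, (D μ k i * v i) ^ 2 :=
  Finset.sum_congr rfl fun i _ => by rw [mul_pow, D_sq hk hmarg]

lemma den_pos (hk : 1 ≤ k) (hmarg : ∀ i, 0 < margin μ k i) {v : Fin n → ℝ} (hv : v ≠ 0) :
    0 < ∑ i, statDist μ k i * v i ^ 2 := by
  obtain ⟨i, hi⟩ := Function.ne_iff.1 hv
  refine Finset.sum_pos' (fun j _ => mul_nonneg (statDist_pos hk hmarg j).le (sq_nonneg _))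
    ⟨i, Finset.mem_univ i, ?_⟩
  have : (0:ℝ) < v i ^ 2 := lt_of_le_of_ne (sq_nonneg _) (Ne.symm (pow_ne_zero 2 hi))
  exact mul_pos (statDist_pos hk hmarg i) this

lemma N_symm (i j : Fin n) : N μ k j i = N μ k i j := by
  unfold N
  rw [pairProb_comm, mul_comm (D μ k j) (D μ k i)]

lemma N_herm : (N μ k).IsHermitian :=
  Matrix.ext fun i j => by
    rw [Matrix.conjTranspose_apply, star_trivial, N_symm]

lemma D_corr_N (hk : 1 ≤ k) (hmarg : ∀ i, 0 < margin μ k i) (i j : Fin n) :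
    D μ k i * corrMatrix μ k i j = N μ k i j * D μ k j := by
  have hk0 : (k : ℝ) ≠ 0 := by
    have : (0:ℝ) < k := by exact_mod_cast hk
    exact this.ne'
  have hdi := (D_pos hk hmarg i).ne'
  have hdj := (D_pos hk hmarg j).ne'
  unfold corrMatrix condProb N
  by_cases hij : i = j
  · subst hij
    rw [if_pos rfl, pairProb_self, margin_eq hk hmarg i]
    field_simp
  · rw [if_neg hij, margin_eq hk hmarg i, margin_eq hk hmarg j]
    field_simp

lemma N_mulVec (hk : 1 ≤ k) (hmarg : ∀ i, 0 < margin μ k i) (v : Fin n → ℝ) :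
    N μ k *ᵥ (fun i => D μ k i * v i) = fun i => D μ k i * ((corrMatrix μ k) *ᵥ v) i := by
  funext i
  simp only [Matrix.mulVec, dotProduct]
  rw [Finset.mul_sum]
  refine Finset.sum_congr rfl fun j _ => ?_
  calc N μ k i j * (D μ k j * v j) = (N μ k i j * D μ k j) * v j := by ring
    _ = (D μ k i * corrMatrix μ k i j) * v j := by rw [D_corr_N hk hmarg]
    _ = D μ k i * (corrMatrix μ k i j * v j) := by ring

lemma eigen_set (hk : 1 ≤ k) (hmarg : ∀ i, 0 < margin μ k i) :
    {t : ℝ | Module.End.HasEigenvalue (Matrix.toLin' (corrMatrix μ k)) t}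
      = {t : ℝ | Module.End.HasEigenvalue (Matrix.toLin' (N μ k)) t} := by
  ext t
  simp only [Set.mem_setOf_eq, hasEigenvalue_toLin'_iff]
  constructor
  · rintro ⟨v, hv0, hv⟩
    refine ⟨fun i => D μ k i * v i, ?_, ?_⟩
    · intro h
      apply hv0
      funext i
      have := congrFun h i
      simpa [(D_pos hk hmarg i).ne'] using this
    · rw [N_mulVec hk hmarg, hv]
      funext i
      simp [Pi.smul_apply, smul_eq_mul]
      ring
  · rintro ⟨w, hw0, hw⟩
    set v : Fin n → ℝ := fun i => w i / D μ k i with hvdef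
    have hdv : (fun i => D μ k i * v i) = w := by
      funext i
      rw [hvdef, mul_comm, div_mul_cancel₀ _ ((D_pos hk hmarg i).ne')]
    refine ⟨v, ?_, ?_⟩
    · intro h
      apply hw0
      rw [← hdv, h]
      funext i
      simp
    · have h1 := N_mulVec hk hmarg (μ := μ) v
      rw [hdv, hw] at h1
      funext i
      have h2 := congrFun h1 i
      simp only [Pi.smul_apply, smul_eq_mul] at h2 ⊢
      have hdi := (D_pos hk hmarg i).ne'
      -- h2 : t * w i = D i * (corr *ᵥ v) i ; and w i = D i * v i
      have h3 : D μ k i * (t * v i) = D μ k i * ((corrMatrix μ k *ᵥ v) i) := by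
        rw [← h2, ← congrFun hdv i]
        ring
      exact (mul_left_cancel₀ hdi h3).symm

lemma N_mulVec_D (hk : 1 ≤ k) (hmarg : ∀ i, 0 < margin μ k i)
    (hsum : ∑ S ∈ kSets n k, μ S = 1) :
    N μ k *ᵥ D μ k = 0 := by
  have hk0 : (k : ℝ) ≠ 0 := by
    have : (0:ℝ) < k := by exact_mod_cast hk
    exact this.ne'
  funext i
  have hdi := (D_pos hk hmarg i).ne'
  simp only [Matrix.mulVec, dotProduct, Pi.zero_apply]
  have h1 : ∀ j, N μ k i j * D μ k j
      = pairProb μ k i j * (1 / ((k:ℝ) * D μ k i)) - ((k:ℝ) * D μ k i) * D μ k j ^ 2 := by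
    intro j
    have hdj := (D_pos hk hmarg j).ne'
    unfold N
    field_simp
  rw [Finset.sum_congr rfl fun j _ => h1 j, Finset.sum_sub_distrib, ← Finset.sum_mul,
    ← Finset.mul_sum, sum_pairProb, sum_D_sq hk hmarg hsum, margin_eq hk hmarg i]
  field_simp
  ring

lemma wNw (hk : 1 ≤ k) (hmarg : ∀ i, 0 < margin μ k i) (v : Fin n → ℝ) :
    (fun i => D μ k i * v i) ⬝ᵥ (N μ k *ᵥ (fun i => D μ k i * v i))
      = Q μ k v / k - k * (∑ i, statDist μ k i * v i) ^ 2 := by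
  have hk0 : (k : ℝ) ≠ 0 := by
    have : (0:ℝ) < k := by exact_mod_cast hk
    exact this.ne'
  have key : ∀ i j, (D μ k i * v i) * (N μ k i j * (D μ k j * v j))
      = v i * v j * pairProb μ k i j / k
        - (k:ℝ) * ((statDist μ k i * v i) * (statDist μ k j * v j)) := by
    intro i j
    have hdi := (D_pos hk hmarg i).ne'
    have hdj := (D_pos hk hmarg j).ne'
    have hsi : statDist μ k i = D μ k i ^ 2 := (D_sq hk hmarg i).symm
    have hsj : statDist μ k j = D μ k j ^ 2 := (D_sq hk hmarg j).symm
    rw [hsi, hsj]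
    unfold N
    field_simp
  calc (fun i => D μ k i * v i) ⬝ᵥ (N μ k *ᵥ (fun i => D μ k i * v i))
      = ∑ i, ∑ j, (D μ k i * v i) * (N μ k i j * (D μ k j * v j)) := by
        simp only [dotProduct, Matrix.mulVec, Finset.mul_sum]
    _ = ∑ i, ∑ j, (v i * v j * pairProb μ k i j / k
          - (k:ℝ) * ((statDist μ k i * v i) * (statDist μ k j * v j))) := by
        exact Finset.sum_congr rfl fun i _ => Finset.sum_congr rfl fun j _ => key i j
    _ = Q μ k v / k - k * (∑ i, statDist μ k i * v i) ^ 2 := by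
        rw [Finset.sum_congr rfl fun i (_ : i ∈ Finset.univ) => Finset.sum_sub_distrib _ _,
          Finset.sum_sub_distrib]
        congr 1
        · unfold Q
          rw [Finset.sum_div]
          exact Finset.sum_congr rfl fun i _ => by rw [Finset.sum_div]
        · rw [sq, Finset.sum_mul_sum, Finset.mul_sum]
          refine Finset.sum_congr rfl fun i _ => ?_
          rw [Finset.mul_sum]

lemma ww (v : Fin n → ℝ) :
    (fun i => D μ k i * v i) ⬝ᵥ (fun i => D μ k i * v i) = ∑ i, (D μ k i * v i) ^ 2 := by
  simp only [dotProduct]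
  exact Finset.sum_congr rfl fun i _ => (sq _).symm

end UD

open Matrix

/-- For a distribution `μ` on k-subsets of `[n]`, the second-largest
eigenvalue of the `1 ↔ k` up-down walk `P = U_{1→k} D_{k→1}` equals `λ_max(Ψ_μ)/k`. -/
theorem lambdaTwo_upDown_eq_lambdaMax_corr_div_k
    (n k : ℕ) (μ : Finset (Fin n) → ℝ)
    (hn : 2 ≤ n) (hk : 1 ≤ k)
    (hnonneg : ∀ S, 0 ≤ μ S)
    (hsum : ∑ S ∈ kSets n k, μ S = 1)
    (hmarg : ∀ i, 0 < margin μ k i) :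
    lambdaTwo μ k = lambdaMax (corrMatrix μ k) / k := by
  classical
  have hk0 : (0:ℝ) < k := by exact_mod_cast hk
  have hN := UD.N_herm (μ := μ) (k := k)
  obtain ⟨i₀, hmax, w₀, hw₀0, hw₀⟩ := UD.exists_max_eigenvector hN (by omega : 0 < n)
  set Λ : ℝ := hN.eigenvalues i₀ with hΛdef
  -- Step 1 : `lambdaMax (corrMatrix μ k) = Λ`
  have hbddE : ∀ t ∈ {t : ℝ | Module.End.HasEigenvalue (Matrix.toLin' (UD.N μ k)) t}, t ≤ Λ := by
    intro t ht
    obtain ⟨v, hv0, hv⟩ := (UD.hasEigenvalue_toLin'_iff _ _).1 ht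
    exact UD.eig_le_max hN hmax hv0 hv
  have hmem : Λ ∈ {t : ℝ | Module.End.HasEigenvalue (Matrix.toLin' (UD.N μ k)) t} :=
    (UD.hasEigenvalue_toLin'_iff _ _).2 ⟨w₀, hw₀0, hw₀⟩
  have hmaxEq : lambdaMax (corrMatrix μ k) = Λ := by
    unfold lambdaMax
    rw [UD.eigen_set hk hmarg]
    exact le_antisymm (csSup_le ⟨Λ, hmem⟩ hbddE) (le_csSup ⟨Λ, hbddE⟩ hmem)
  -- Step 2 : `lambdaTwo μ k = Λ / k`
  set Rset : Set ℝ := {t : ℝ | ∃ v : Fin n → ℝ, v ≠ 0 ∧ (∑ i, statDist μ k i * v i) = 0 ∧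
    t = (∑ i, statDist μ k i * v i * ((upDown μ k).mulVec v i)) /
        (∑ i, statDist μ k i * (v i) ^ 2)} with hRdef
  have hlt : lambdaTwo μ k = sSup Rset := rfl
  have h00 : (k:ℝ) * (0:ℝ) ^ 2 = 0 := by ring
  -- upper bound for elements of `Rset`
  have hub : ∀ t ∈ Rset, t ≤ Λ / k := by
    rintro t ⟨v, hv0, hortho, rfl⟩
    have hnum := UD.num_eq hk hmarg (μ := μ) v
    have hden := UD.den_pos hk hmarg (μ := μ) hv0
    have hquad := UD.wNw hk hmarg (μ := μ) v
    rw [hortho] at hquad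
    have hray := UD.rayleigh_le hN hmax (fun i => UD.D μ k i * v i)
    rw [UD.ww, hquad, ← UD.den_eq hk hmarg] at hray
    rw [hnum, div_le_div_iff₀ hden hk0]
    have hQk : UD.Q μ k v / (k:ℝ)^2 * k = UD.Q μ k v / k := by field_simp
    rw [hQk]
    linarith [hray]
  have hbddR : BddAbove Rset := ⟨Λ / k, fun t ht => hub t ht⟩
  have hnonnegR : ∀ t ∈ Rset, 0 ≤ t := by
    rintro t ⟨v, hv0, hortho, rfl⟩
    refine div_nonneg ?_ (UD.den_pos hk hmarg hv0).le
    rw [UD.num_eq hk hmarg]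
    exact div_nonneg (UD.Q_nonneg hnonneg v) (by positivity)
  have hRne : Rset.Nonempty := by
    set a : Fin n := ⟨0, by omega⟩ with ha
    set b : Fin n := ⟨1, by omega⟩ with hb
    have h01 : a ≠ b := by simp [ha, hb, Fin.ext_iff]
    have h10 : b ≠ a := h01.symm
    set v₀ : Fin n → ℝ := fun i =>
      if i = a then statDist μ k b else if i = b then -statDist μ k a else 0 with hv₀def
    have hv₀a : v₀ a = statDist μ k b := by simp [hv₀def]
    have hv₀b : v₀ b = -statDist μ k a := by simp [hv₀def, h10]
    refine ⟨_, v₀, ?_, ?_, rfl⟩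
    · intro h
      have h2 : v₀ a = 0 := by rw [h]; rfl
      rw [hv₀a] at h2
      exact (UD.statDist_pos hk hmarg b).ne' h2
    · have hsupp : ∀ x ∈ Finset.univ, x ∉ ({a, b} : Finset (Fin n)) →
          statDist μ k x * v₀ x = 0 := by
        intro x _ hx
        simp only [Finset.mem_insert, Finset.mem_singleton, not_or] at hx
        simp [hv₀def, hx.1, hx.2]
      rw [← Finset.sum_subset (Finset.subset_univ ({a, b} : Finset (Fin n))) hsupp,
        Finset.sum_pair h01, hv₀a, hv₀b]
      ring
  rw [hlt, hmaxEq]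
  refine le_antisymm (csSup_le hRne hub) ?_
  rcases le_or_gt Λ 0 with hΛ | hΛ
  · obtain ⟨t₀, ht₀⟩ := hRne
    have h1 : Λ / (k:ℝ) ≤ 0 := div_nonpos_of_nonpos_of_nonneg hΛ hk0.le
    exact h1.trans ((hnonnegR t₀ ht₀).trans (le_csSup hbddR ht₀))
  · -- `Λ > 0` : use the top eigenvector of `N`
    have hNd := UD.N_mulVec_D hk hmarg hsum
    have hdw : ∑ i, UD.D μ k i * w₀ i = 0 := by
      have hswap : ∑ i, UD.D μ k i * (UD.N μ k *ᵥ w₀) i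
          = ∑ j, (UD.N μ k *ᵥ UD.D μ k) j * w₀ j := by
        simp only [Matrix.mulVec, dotProduct, Finset.mul_sum, Finset.sum_mul]
        rw [Finset.sum_comm]
        exact Finset.sum_congr rfl fun j _ => Finset.sum_congr rfl fun i _ => by
          rw [UD.N_symm]; ring
      rw [hw₀, hNd] at hswap
      have hL : ∑ i, UD.D μ k i * ((Λ • w₀) i) = Λ * ∑ i, UD.D μ k i * w₀ i := by
        rw [Finset.mul_sum]
        exact Finset.sum_congr rfl fun i _ => by
          simp only [Pi.smul_apply, smul_eq_mul]; ring
      have hR : ∑ j, ((0 : Fin n → ℝ)) j * w₀ j = 0 := by simp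
      have h9 : Λ * ∑ i, UD.D μ k i * w₀ i = 0 := by rw [← hL, hswap, hR]
      exact (mul_eq_zero.1 h9).resolve_left hΛ.ne'
    set v : Fin n → ℝ := fun i => w₀ i / UD.D μ k i with hvdef
    have hdv : (fun i => UD.D μ k i * v i) = w₀ := by
      funext i
      rw [hvdef, mul_comm, div_mul_cancel₀ _ ((UD.D_pos hk hmarg i).ne')]
    have hv0 : v ≠ 0 := by
      intro h
      apply hw₀0
      rw [← hdv, h]
      funext i
      simp
    have hortho : ∑ i, statDist μ k i * v i = 0 := by
      rw [← hdw]
      refine Finset.sum_congr rfl fun i _ => ?_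
      have hd := (UD.D_pos hk hmarg i).ne'
      rw [hvdef, ← UD.D_sq hk hmarg i, sq, mul_assoc,
        mul_comm (UD.D μ k i) (w₀ i / UD.D μ k i), div_mul_cancel₀ _ hd]
    have hden := UD.den_pos hk hmarg hv0
    have hquad := UD.wNw hk hmarg (μ := μ) v
    rw [hdv, hw₀, hortho] at hquad
    have hdot : w₀ ⬝ᵥ (Λ • w₀) = Λ * (∑ i, statDist μ k i * v i ^ 2) := by
      have h7 : ∑ i, statDist μ k i * v i ^ 2 = ∑ i, w₀ i * w₀ i := by
        rw [UD.den_eq hk hmarg]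
        refine Finset.sum_congr rfl fun i _ => ?_
        have h8 : UD.D μ k i * v i = w₀ i := by simpa using congrFun hdv i
        rw [← h8, sq]
      rw [h7, Finset.mul_sum]
      simp only [dotProduct, Pi.smul_apply, smul_eq_mul]
      exact Finset.sum_congr rfl fun i _ => by ring
    rw [hdot] at hquad
    have h5 : UD.Q μ k v / k = Λ * (∑ i, statDist μ k i * v i ^ 2) := by
      linarith [hquad, h00]
    have h6 : UD.Q μ k v = Λ * (∑ i, statDist μ k i * v i ^ 2) * k :=
      (div_eq_iff hk0.ne').1 h5
    have hval : (∑ i, statDist μ k i * v i * ((upDown μ k).mulVec v i)) /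
        (∑ i, statDist μ k i * (v i) ^ 2) = Λ / k := by
      rw [UD.num_eq hk hmarg, h6]
      field_simp [hden.ne']
    exact le_csSup hbddR ⟨v, hv0, hortho, hval.symm⟩

end
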